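/- Let n be even with n ≥ 4, and let B̅_2 be the n-vertex bicyclic graph obtained from the path v_1 v_2 … v_n by adding the two edges v_1 v_3 and v_1 v_4. Then τ(B̅_2) = 3n²/4 − n − 2. -/

import Mathlib

open SimpleGraph Finset

/-- The eccentricity of a vertex `v` in a graph `G`: the maximum distance from `v`
to any vertex of `G`. -/
noncomputable def ecc {V : Type} [Fintype V] (G : SimpleGraph V) (v : V) : ℕ :=
  Finset.univ.sup fun w => G.dist v w

/-- The total-eccentricity index `τ(G) = ∑_{v ∈ V(G)} e_G(v)`. -/
noncomputable def totalEcc {V : Type} [Fintype V] (G : SimpleGraph V) : ℕ :=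
  ∑ v : V, ecc G v

namespace B2aux

variable {n : ℕ}

def B2 (n : ℕ) (hn : 4 ≤ n) : SimpleGraph (Fin n) :=
  pathGraph n ⊔
    fromEdgeSet {s((⟨0, Nat.lt_of_lt_of_le (by decide) hn⟩ : Fin n), (⟨2, Nat.lt_of_lt_of_le (by decide) hn⟩ : Fin n)),
                 s((⟨0, Nat.lt_of_lt_of_le (by decide) hn⟩ : Fin n), (⟨3, Nat.lt_of_lt_of_le (by decide) hn⟩ : Fin n))}

lemma B2_adj (hn : 4 ≤ n) {a b : Fin n} :
    (B2 n hn).Adj a b ↔ a.val + 1 = b.val ∨ b.val + 1 = a.val ∨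
      (a.val = 0 ∧ b.val = 2) ∨ (a.val = 2 ∧ b.val = 0) ∨
      (a.val = 0 ∧ b.val = 3) ∨ (a.val = 3 ∧ b.val = 0) := by
  simp only [B2, sup_adj, pathGraph_adj, fromEdgeSet_adj, Set.mem_insert_iff,
    Set.mem_singleton_iff, Sym2.eq_iff, Fin.ext_iff, ne_eq]
  omega

lemma exists_walk_up (hn : 4 ≤ n) :
    ∀ (k : ℕ) (a b : Fin n), b.val = a.val + k →
      ∃ p : (B2 n hn).Walk a b, p.length = k := by
  intro k
  induction k with
  | zero =>
    intro a b h
    obtain rfl : a = b := Fin.ext (by omega)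
    exact ⟨.nil, rfl⟩
  | succ k ih =>
    intro a b h
    have hb := b.isLt
    have hlt : a.val + 1 < n := by omega
    obtain ⟨p, hp⟩ := ih ⟨a.val + 1, hlt⟩ b (show b.val = (a.val + 1) + k by omega)
    have hadj : (B2 n hn).Adj a ⟨a.val + 1, hlt⟩ := by
      rw [B2_adj hn]; left; rfl
    exact ⟨.cons hadj p, by simp [hp]⟩

lemma dist_le_of_le (hn : 4 ≤ n) {a b : Fin n} (h : a.val ≤ b.val) :
    (B2 n hn).dist a b ≤ b.val - a.val := by
  obtain ⟨p, hp⟩ := exists_walk_up hn (b.val - a.val) a b (by omega)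
  exact hp ▸ SimpleGraph.dist_le p

lemma reachable (hn : 4 ≤ n) (a b : Fin n) : (B2 n hn).Reachable a b := by
  rcases le_total a.val b.val with h | h
  · obtain ⟨p, -⟩ := exists_walk_up hn (b.val - a.val) a b (by omega)
    exact ⟨p⟩
  · obtain ⟨p, -⟩ := exists_walk_up hn (a.val - b.val) b a (by omega)
    exact (Reachable.symm ⟨p⟩)

def phi (n : ℕ) (v : Fin n) : ℤ := if v.val = 0 then 2 else v.val

lemma phi_lip (hn : 4 ≤ n) {a b : Fin n} (h : (B2 n hn).Adj a b) :
    phi n a - phi n b ≤ 1 := by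
  rw [B2_adj hn] at h
  unfold phi
  split_ifs <;> omega

lemma phi_walk_le (hn : 4 ≤ n) {a b : Fin n} (p : (B2 n hn).Walk a b) :
    phi n a - phi n b ≤ (p.length : ℤ) := by
  induction p with
  | nil => simp
  | cons h p ih =>
    rw [SimpleGraph.Walk.length_cons]
    have h1 := phi_lip hn h
    push_cast
    linarith

lemma phi_le_dist (hn : 4 ≤ n) (a b : Fin n) :
    phi n a - phi n b ≤ ((B2 n hn).dist a b : ℤ) := by
  obtain ⟨p, hp⟩ := (reachable hn a b).exists_walk_length_eq_dist
  exact hp ▸ phi_walk_le hn p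

lemma dist_zero_le (hn : 4 ≤ n) (z w : Fin n) (hz : z.val = 0) :
    (B2 n hn).dist z w ≤ max 1 (w.val - 2) := by
  have hw := w.isLt
  by_cases h3 : 3 ≤ w.val
  · obtain ⟨p, hp⟩ := exists_walk_up hn (w.val - 3) ⟨3, by omega⟩ w
      (show w.val = 3 + (w.val - 3) by omega)
    have adj03 : (B2 n hn).Adj z ⟨3, by omega⟩ := by
      rw [B2_adj hn]
      exact Or.inr (Or.inr (Or.inr (Or.inr (Or.inl ⟨hz, rfl⟩))))
    have := SimpleGraph.dist_le (SimpleGraph.Walk.cons adj03 p)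
    simp only [SimpleGraph.Walk.length_cons, hp] at this
    omega
  · have h : w.val = 0 ∨ w.val = 1 ∨ w.val = 2 := by omega
    rcases h with h | h | h
    · obtain rfl : z = w := Fin.ext (by omega)
      simp [SimpleGraph.dist_self]
    · have := dist_le_of_le hn (a := z) (b := w) (by omega)
      omega
    · have adj02 : (B2 n hn).Adj z w := by
        rw [B2_adj hn]
        exact Or.inr (Or.inr (Or.inl ⟨hz, h⟩))
      have := SimpleGraph.dist_le (SimpleGraph.Walk.cons adj02 SimpleGraph.Walk.nil)
      simp at this
      omega

lemma ecc_zero (hn : 4 ≤ n) (z : Fin n) (hz : z.val = 0) : ecc (B2 n hn) z = n - 3 := by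
  apply le_antisymm
  · apply Finset.sup_le
    intro w _
    have hw := w.isLt
    have := dist_zero_le hn z w hz
    omega
  · have h1 := phi_le_dist hn (⟨n - 1, by omega⟩ : Fin n) z
    rw [SimpleGraph.dist_comm] at h1
    have h2 : phi n (⟨n - 1, by omega⟩ : Fin n) = (n : ℤ) - 1 := by
      unfold phi
      rw [if_neg (by simp; omega)]
      simp
      omega
    have h3 : phi n z = 2 := by
      unfold phi
      rw [if_pos hz]
    rw [h2, h3] at h1
    calc n - 3 ≤ (B2 n hn).dist z ⟨n - 1, by omega⟩ := by omega
    _ ≤ _ := Finset.le_sup (mem_univ _)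

lemma ecc_pos (hn : 4 ≤ n) (i : Fin n) (hi : 1 ≤ i.val) :
    ecc (B2 n hn) i = max (i.val - 1) (n - 1 - i.val) := by
  have hilt := i.isLt
  have hphi : phi n i = (i.val : ℤ) := by unfold phi; rw [if_neg (by omega)]
  apply le_antisymm
  · apply Finset.sup_le
    intro w _
    have hwlt := w.isLt
    by_cases hw0 : w.val = 0
    · rw [SimpleGraph.dist_comm]
      have := dist_zero_le hn w i hw0
      omega
    · rcases le_total i.val w.val with h | h
      · have := dist_le_of_le hn (a := i) (b := w) h
        omega
      · have := dist_le_of_le hn (a := w) (b := i) h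
        rw [SimpleGraph.dist_comm]
        omega
  · apply max_le
    · have h1 := phi_le_dist hn i ⟨1, by omega⟩
      have h2 : phi n (⟨1, by omega⟩ : Fin n) = 1 := by
        unfold phi; rw [if_neg (by simp)]; simp
      rw [hphi, h2] at h1
      calc i.val - 1 ≤ (B2 n hn).dist i ⟨1, by omega⟩ := by omega
      _ ≤ _ := Finset.le_sup (mem_univ _)
    · have h1 := phi_le_dist hn (⟨n - 1, by omega⟩ : Fin n) i
      rw [SimpleGraph.dist_comm] at h1
      have h2 : phi n (⟨n - 1, by omega⟩ : Fin n) = (n : ℤ) - 1 := by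
        unfold phi
        rw [if_neg (by simp; omega)]
        simp
        omega
      rw [hphi, h2] at h1
      calc n - 1 - i.val ≤ (B2 n hn).dist i ⟨n - 1, by omega⟩ := by omega
      _ ≤ _ := Finset.le_sup (mem_univ _)

lemma sumA (k : ℕ) : ∑ i ∈ range (2 * k + 1), (2 * k - i) = 2 * k ^ 2 + k := by
  induction k with
  | zero => simp
  | succ k ih =>
    have h1 : 2 * (k + 1) + 1 = (2 * k + 1) + 1 + 1 := by ring
    rw [h1, Finset.sum_range_succ, Finset.sum_range_succ]
    have h2 : ∑ i ∈ range (2 * k + 1), (2 * (k + 1) - i)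
        = ∑ i ∈ range (2 * k + 1), ((2 * k - i) + 2) :=
      Finset.sum_congr rfl fun i hi => by rw [Finset.mem_range] at hi; omega
    rw [h2, Finset.sum_add_distrib, ih, Finset.sum_const, Finset.card_range, smul_eq_mul]
    have e1 : 2 * (k + 1) - (2 * k + 1) = 1 := by omega
    have e2 : 2 * (k + 1) - (2 * k + 1 + 1) = 0 := by omega
    rw [e1, e2]
    ring

lemma sumB (k : ℕ) : ∑ i ∈ range (2 * k + 1), (2 * i - 2 * k) = k ^ 2 + k := by
  induction k with
  | zero => simp
  | succ k ih =>
    have h1 : 2 * (k + 1) + 1 = (2 * k + 2) + 1 := by ring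
    rw [h1, Finset.sum_range_succ']
    have h2 : ∑ i ∈ range (2 * k + 2), (2 * (i + 1) - 2 * (k + 1))
        = ∑ i ∈ range (2 * k + 2), (2 * i - 2 * k) :=
      Finset.sum_congr rfl fun i _ => by omega
    rw [h2, Finset.sum_range_succ, ih]
    have e1 : 2 * (2 * k + 1) - 2 * k = 2 * k + 2 := by omega
    have e2 : 2 * 0 - 2 * (k + 1) = 0 := by omega
    rw [e1, e2]
    ring

lemma sumM (k : ℕ) : ∑ i ∈ range (2 * k + 1), max i (2 * k - i) = 3 * k ^ 2 + 2 * k := by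
  have h : ∑ i ∈ range (2 * k + 1), max i (2 * k - i)
      = ∑ i ∈ range (2 * k + 1), ((2 * k - i) + (2 * i - 2 * k)) :=
    Finset.sum_congr rfl fun i hi => by rw [Finset.mem_range] at hi; omega
  rw [h, Finset.sum_add_distrib, sumA, sumB]
  ring

end B2aux

open B2aux in
/-- For even `n ≥ 4`, the bicyclic graph `B̅₂` obtained from the path `v₁v₂⋯vₙ` by
adding the edges `v₁v₃` and `v₁v₄` satisfies `τ(B̅₂) = 3n²/4 - n - 2`. -/
theorem totalEcc_B2 (n : ℕ) (hn : 4 ≤ n) (hev : Even n) :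
    (totalEcc (pathGraph n ⊔
        fromEdgeSet {s((⟨0, by omega⟩ : Fin n), (⟨2, by omega⟩ : Fin n)),
                     s((⟨0, by omega⟩ : Fin n), (⟨3, by omega⟩ : Fin n))}) : ℚ) =
      3 * n ^ 2 / 4 - n - 2 := by
  obtain ⟨m, hm⟩ : ∃ m, n = 2 * m := by
    obtain ⟨r, hr⟩ := hev; exact ⟨r, by omega⟩
  have hm2 : 2 ≤ m := by omega
  show (totalEcc (B2 n hn) : ℚ) = 3 * n ^ 2 / 4 - n - 2
  have key : totalEcc (B2 n hn) = 3 * (m - 1) ^ 2 + 2 * (m - 1) + (n - 3) := by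
    unfold totalEcc
    have hE : ∀ v : Fin n, ecc (B2 n hn) v
        = if v.val = 0 then n - 3 else max (v.val - 1) (n - 1 - v.val) := by
      intro v
      by_cases h : v.val = 0
      · rw [if_pos h, ecc_zero hn v h]
      · rw [if_neg h, ecc_pos hn v (by omega)]
    rw [Finset.sum_congr rfl fun v _ => hE v]
    rw [Fin.sum_univ_eq_sum_range (fun i => if i = 0 then n - 3 else max (i - 1) (n - 1 - i)) n]
    have hn' : n = (n - 1) + 1 := by omega
    rw [hn', Finset.sum_range_succ']
    have h2 : ∑ i ∈ range (n - 1),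
          (if i + 1 = 0 then n - 1 + 1 - 3 else max (i + 1 - 1) (n - 1 + 1 - 1 - (i + 1)))
        = ∑ i ∈ range (2 * (m - 1) + 1), max i (2 * (m - 1) - i) := by
      have hrw : n - 1 = 2 * (m - 1) + 1 := by omega
      rw [hrw]
      exact Finset.sum_congr rfl fun i hi => by
        rw [Finset.mem_range] at hi
        rw [if_neg (by omega)]
        omega
    rw [h2, sumM, if_pos rfl]
  rw [key]
  have h1 : (((3 * (m - 1) ^ 2 + 2 * (m - 1) + (n - 3)) : ℕ) : ℚ)
      = 3 * ((m : ℚ) - 1) ^ 2 + 2 * ((m : ℚ) - 1) + ((n : ℚ) - 3) := by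
    have e1 : ((m - 1 : ℕ) : ℚ) = (m : ℚ) - 1 := by
      rw [Nat.cast_sub (by omega)]; simp
    have e2 : ((n - 3 : ℕ) : ℚ) = (n : ℚ) - 3 := by
      rw [Nat.cast_sub (by omega)]; simp
    push_cast [e1, e2]
    ring
  rw [h1]
  have hnq : (n : ℚ) = 2 * m := by exact_mod_cast congrArg (Nat.cast : ℕ → ℚ) hm
  rw [hnq]
  field_simp
  ring
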